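/- arXiv:1409.4786 — 5 statements merged into one kernel-verified Lean document; each statement's English description precedes it below -/
import Mathlib

section
/- There exists a unique real number x₀ such that f(x₀) = 0, where f(x) = σ₁|E − Kx|^{p−2}(E − Kx) − σ₂(E − Kx) − σ₂x. -/
open Real Filter

private lemma habs_nonneg {p : ℝ} (hp : 1 < p) {a : ℝ} (ha : 0 ≤ a) :
    |a| ^ (p - 2) * a = a ^ (p - 1) := by
  rcases eq_or_lt_of_le ha with h | h
  · rw [← h]
    simp [Real.zero_rpow (show p - 1 ≠ 0 by intro h'; linarith)]
  · rw [abs_of_pos h, show p - 1 = (p - 2) + 1 by ring, Real.rpow_add_one (ne_of_gt h)]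

private lemma habs_nonpos {p : ℝ} (hp : 1 < p) {a : ℝ} (ha : a ≤ 0) :
    |a| ^ (p - 2) * a = -((-a) ^ (p - 1)) := by
  have h := habs_nonneg hp (neg_nonneg.2 ha)
  rw [abs_neg] at h
  linarith

private lemma hmono {p : ℝ} (hp : 1 < p) :
    StrictMono (fun t : ℝ => |t| ^ (p - 2) * t) := by
  intro s t hst
  simp only
  rcases le_or_gt 0 s with hs | hs
  · rw [habs_nonneg hp hs, habs_nonneg hp (le_of_lt (lt_of_le_of_lt hs hst))]
    exact Real.rpow_lt_rpow hs hst (by linarith)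
  · rcases le_or_gt t 0 with ht | ht
    · rw [habs_nonpos hp (le_of_lt hs), habs_nonpos hp ht]
      have h1 : (-t) ^ (p - 1) < (-s) ^ (p - 1) :=
        Real.rpow_lt_rpow (by linarith) (by linarith) (by linarith)
      linarith
    · rw [habs_nonpos hp (le_of_lt hs), habs_nonneg hp (le_of_lt ht)]
      have h1 : 0 < (-s) ^ (p - 1) := Real.rpow_pos_of_pos (by linarith) _
      have h2 : 0 < t ^ (p - 1) := Real.rpow_pos_of_pos ht _
      linarith

private lemma hcont {p : ℝ} (hp : 1 < p) :
    Continuous (fun t : ℝ => |t| ^ (p - 2) * t) := by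
  rw [continuous_iff_continuousAt]
  intro x
  rcases eq_or_ne x 0 with rfl | hx
  · have h0 : |(0:ℝ)| ^ (p - 2) * (0:ℝ) = 0 := by simp
    rw [ContinuousAt, h0]
    apply squeeze_zero_norm (a := fun t : ℝ => |t| ^ (p - 1))
    · intro t
      have h1 : ‖|t| ^ (p - 2) * t‖ = |t| ^ (p - 2) * |t| := by
        rw [norm_mul, Real.norm_eq_abs, Real.norm_eq_abs,
          abs_of_nonneg (Real.rpow_nonneg (abs_nonneg t) _)]
      have h2 := habs_nonneg hp (abs_nonneg t)
      rw [abs_abs] at h2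
      rw [h1, h2]
    · have hc : ContinuousAt (fun t : ℝ => |t| ^ (p - 1)) 0 :=
        (Real.continuousAt_rpow_const _ _ (Or.inr (by linarith))).comp
          continuous_abs.continuousAt
      simpa [ContinuousAt, abs_zero,
        Real.zero_rpow (show p - 1 ≠ 0 by intro h'; linarith)] using hc
  · exact ((Real.continuousAt_rpow_const _ _ (Or.inl (abs_ne_zero.mpr hx))).comp
      continuous_abs.continuousAt).mul continuousAt_id

/-- With `σ₁ > σ₂ > 0`, `p > 1`, `E ∈ ℝ`, `0 < K < 1`, the equation
`f(x₀) = 0` with `f(x) = σ₁ |E − Kx|^(p−2) (E − Kx) − σ₂ (E − Kx) − σ₂ x`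
has a unique real solution `x₀`. -/
theorem f_existsUnique_root (σ₁ σ₂ p E K : ℝ) (h₁₂ : σ₁ > σ₂) (h₂ : σ₂ > 0) (hp : p > 1)
    (hK₀ : 0 < K) (hK₁ : K < 1) :
    ∃! x₀ : ℝ,
      σ₁ * |E - K * x₀| ^ (p - 2) * (E - K * x₀) - σ₂ * (E - K * x₀) - σ₂ * x₀ = 0 := by
  have hσ₁ : 0 < σ₁ := lt_trans h₂ h₁₂
  set f : ℝ → ℝ :=
    fun x => σ₁ * |E - K * x| ^ (p - 2) * (E - K * x) - σ₂ * (E - K * x) - σ₂ * x with hf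
  show ∃! x₀ : ℝ, f x₀ = 0
  -- f is strictly antitone
  have hant : StrictAnti f := by
    intro x y hxy
    have h1 : |E - K * y| ^ (p - 2) * (E - K * y) < |E - K * x| ^ (p - 2) * (E - K * x) :=
      hmono hp (by nlinarith)
    have h1' := mul_lt_mul_of_pos_left h1 hσ₁
    have h2 : 0 < σ₂ * ((1 - K) * (y - x)) :=
      mul_pos h₂ (mul_pos (by linarith) (by linarith))
    simp only [hf]
    nlinarith [h1', h2]
  -- f is continuous
  have hfc : Continuous f := by
    have hrw : f = fun x =>
        σ₁ * (|E - K * x| ^ (p - 2) * (E - K * x)) - σ₂ * (E - K * x) - σ₂ * x := by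
      ext x; simp only [hf]; ring
    rw [hrw]
    exact ((continuous_const.mul ((hcont hp).comp (by continuity))).sub (by continuity)).sub
      (by continuity)
  -- two points with opposite signs
  set t₁ : ℝ := min 0 (E / (1 - K)) with ht₁
  set t₂ : ℝ := max 0 (E / (1 - K)) with ht₂
  set x₁ : ℝ := (E - t₁) / K with hx₁
  set x₂ : ℝ := (E - t₂) / K with hx₂
  have hE1 : E - K * x₁ = t₁ := by rw [hx₁, mul_comm, div_mul_cancel₀ _ hK₀.ne']; ring
  have hE2 : E - K * x₂ = t₂ := by rw [hx₂, mul_comm, div_mul_cancel₀ _ hK₀.ne']; ring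
  have h1K : (0:ℝ) < 1 - K := by linarith
  have ht2E : E ≤ t₂ * (1 - K) := by
    have h := le_max_right 0 (E / (1 - K))
    rw [div_le_iff₀ h1K] at h
    exact h
  have ht1E : t₁ * (1 - K) ≤ E := by
    have h := min_le_right 0 (E / (1 - K))
    rw [le_div_iff₀ h1K] at h
    exact h
  have hfx2 : 0 ≤ f x₂ := by
    have hA : 0 ≤ |t₂| ^ (p - 2) * t₂ := by
      rw [habs_nonneg hp (le_max_left 0 _)]
      exact Real.rpow_nonneg (le_max_left 0 _) _
    have hKx : σ₂ * (K * x₂) = σ₂ * (E - t₂) := by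
      have : K * x₂ = E - t₂ := by linarith [hE2]
      rw [this]
    simp only [hf, hE2]
    nlinarith [mul_nonneg (mul_nonneg hK₀.le hσ₁.le) hA, hKx,
      mul_le_mul_of_nonneg_left ht2E h₂.le, hK₀]
  have hfx1 : f x₁ ≤ 0 := by
    have hA : |t₁| ^ (p - 2) * t₁ ≤ 0 := by
      rw [habs_nonpos hp (min_le_left 0 _)]
      have := Real.rpow_nonneg (neg_nonneg.2 (min_le_left 0 (E / (1 - K)))) (p - 1)
      linarith
    have hKx : σ₂ * (K * x₁) = σ₂ * (E - t₁) := by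
      have : K * x₁ = E - t₁ := by linarith [hE1]
      rw [this]
    simp only [hf, hE1]
    nlinarith [mul_nonpos_of_nonneg_of_nonpos (mul_nonneg hK₀.le hσ₁.le) hA, hKx,
      mul_le_mul_of_nonneg_left ht1E h₂.le, hK₀]
  have hx21 : x₂ ≤ x₁ := by
    have ht12 : t₁ ≤ t₂ := (min_le_left 0 _).trans (le_max_left 0 _)
    rw [hx₁, hx₂]
    exact (div_le_div_iff_of_pos_right hK₀).mpr (by linarith)
  have hIvt := intermediate_value_Icc' hx21 hfc.continuousOn
  obtain ⟨x₀, -, hx₀⟩ := hIvt ⟨hfx1, hfx2⟩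
  exact ⟨x₀, hx₀, fun y hy => hant.injective (hy.trans hx₀.symm)⟩
end

section
/- For every triple of positive reals l₁, l₂, l₃, the depolarization factors sum to unity: d₁(l₁,l₂,l₃) + d₂(l₁,l₂,l₃) + d₃(l₁,l₂,l₃) = 1. -/
open MeasureTheory

/-- The depolarization factor in direction `j` of an ellipsoid with semi-axis lengths
`l 0, l 1, l 2`:
`d_j(l₁,l₂,l₃) = (l₁l₂l₃/2) ∫₀^∞ dy / ((l_j² + y) √((l₁² + y)(l₂² + y)(l₃² + y)))`. -/
noncomputable def depol (j : Fin 3) (l : Fin 3 → ℝ) : ℝ :=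
  (l 0 * l 1 * l 2) / 2 *
    ∫ y in Set.Ioi (0 : ℝ),
      1 / ((l j ^ 2 + y) * Real.sqrt ((l 0 ^ 2 + y) * (l 1 ^ 2 + y) * (l 2 ^ 2 + y)))

/-- For every triple of positive reals `l₁, l₂, l₃` the depolarization
factors sum to unity: `d₁ + d₂ + d₃ = 1`. -/
theorem depol_sum_eq_one (l : Fin 3 → ℝ) (hl : ∀ j, 0 < l j) :
    depol 0 l + depol 1 l + depol 2 l = 1 := by
  have h0 := hl 0; have h1 := hl 1; have h2 := hl 2
  set P : ℝ → ℝ := fun y => (l 0 ^ 2 + y) * (l 1 ^ 2 + y) * (l 2 ^ 2 + y) with hPdef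
  have hfac : ∀ (j : Fin 3), ∀ y ∈ Set.Ici (0:ℝ), 0 < l j ^ 2 + y := by
    intro j y hy
    have hy' : (0:ℝ) ≤ y := hy
    have := hl j; positivity
  have hPpos : ∀ y ∈ Set.Ici (0:ℝ), 0 < P y := fun y hy =>
    mul_pos (mul_pos (hfac 0 y hy) (hfac 1 y hy)) (hfac 2 y hy)
  set f : Fin 3 → ℝ → ℝ := fun j y => 1 / ((l j ^ 2 + y) * Real.sqrt (P y)) with hfdef
  set g : ℝ → ℝ := fun y => -2 / Real.sqrt (P y) with hgdef
  -- derivative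
  have hderiv : ∀ y ∈ Set.Ici (0:ℝ), HasDerivAt g (f 0 y + f 1 y + f 2 y) y := by
    intro y hy
    have ha := hfac 0 y hy
    have hb := hfac 1 y hy
    have hc := hfac 2 y hy
    have hPy := hPpos y hy
    have hsq : 0 < Real.sqrt (P y) := Real.sqrt_pos.mpr hPy
    have hda : HasDerivAt (fun z => l 0 ^ 2 + z) 1 y := (hasDerivAt_id y).const_add _
    have hdb : HasDerivAt (fun z => l 1 ^ 2 + z) 1 y := (hasDerivAt_id y).const_add _
    have hdc : HasDerivAt (fun z => l 2 ^ 2 + z) 1 y := (hasDerivAt_id y).const_add _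
    have hdP : HasDerivAt P
        ((1 * (l 1 ^ 2 + y) + (l 0 ^ 2 + y) * 1) * (l 2 ^ 2 + y)
          + (l 0 ^ 2 + y) * (l 1 ^ 2 + y) * 1) y := (hda.mul hdb).mul hdc
    have hds : HasDerivAt (fun z => Real.sqrt (P z))
        (1 / (2 * Real.sqrt (P y)) *
          ((1 * (l 1 ^ 2 + y) + (l 0 ^ 2 + y) * 1) * (l 2 ^ 2 + y)
            + (l 0 ^ 2 + y) * (l 1 ^ 2 + y) * 1)) y :=
      (Real.hasDerivAt_sqrt hPy.ne').comp y hdP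
    have hdinv := hds.inv hsq.ne'
    have hdg := hdinv.const_mul (-2 : ℝ)
    have hgeq : g = fun z => -2 * (Real.sqrt (P z))⁻¹ := by
      funext z; simp [hgdef, div_eq_mul_inv]
    rw [hgeq]
    refine hdg.congr_deriv ?_
    set a := l 0 ^ 2 + y
    set b := l 1 ^ 2 + y
    set c := l 2 ^ 2 + y
    set s := Real.sqrt (P y) with hsdef
    have hs2 : s ^ 2 = a * b * c := Real.sq_sqrt hPy.le
    have hrhs : -2 * (-(1 / (2 * s) * ((1 * b + a * 1) * c + a * b * 1)) / s ^ 2)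
        = (b * c + a * c + a * b) / (s ^ 2 * s) := by
      field_simp
    rw [hrhs, hs2]
    simp only [hfdef]
    change (b * c + a * c + a * b) / (a * b * c * s) = 1 / (a * s) + 1 / (b * s) + 1 / (c * s)
    field_simp
  -- nonnegativity of the derivative
  have hfnn : ∀ y ∈ Set.Ici (0:ℝ), ∀ j : Fin 3, 0 ≤ f j y := fun y hy j =>
    le_of_lt (div_pos one_pos (mul_pos (hfac j y hy) (Real.sqrt_pos.mpr (hPpos y hy))))
  have hnonneg : ∀ y ∈ Set.Ioi (0:ℝ), 0 ≤ f 0 y + f 1 y + f 2 y := by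
    intro y hy
    have hy' : y ∈ Set.Ici (0:ℝ) := Set.mem_Ici.mpr (le_of_lt hy)
    linarith [hfnn y hy' 0, hfnn y hy' 1, hfnn y hy' 2]
  -- tendsto 0 at top
  have htend : Filter.Tendsto g Filter.atTop (nhds 0) := by
    have hPtop : Filter.Tendsto P Filter.atTop Filter.atTop := by
      apply Filter.tendsto_atTop_mono' _ _ Filter.tendsto_id
      filter_upwards [Filter.eventually_ge_atTop (1:ℝ)] with y hy
      have s0 := sq_nonneg (l 0); have s1 := sq_nonneg (l 1); have s2 := sq_nonneg (l 2)
      have hA : (y:ℝ) ≤ l 0 ^ 2 + y := by linarith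
      have hB : (1:ℝ) ≤ l 1 ^ 2 + y := by linarith
      have hC : (1:ℝ) ≤ l 2 ^ 2 + y := by linarith
      have hBC : (1:ℝ) ≤ (l 1 ^ 2 + y) * (l 2 ^ 2 + y) := by nlinarith
      show (y:ℝ) ≤ P y
      calc (y:ℝ) ≤ l 0 ^ 2 + y := hA
        _ = (l 0 ^ 2 + y) * 1 := (mul_one _).symm
        _ ≤ (l 0 ^ 2 + y) * ((l 1 ^ 2 + y) * (l 2 ^ 2 + y)) :=
            mul_le_mul_of_nonneg_left hBC (by linarith)
        _ = P y := by rw [hPdef]; ring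
    have hsqrt : Filter.Tendsto Real.sqrt Filter.atTop Filter.atTop :=
      Filter.tendsto_atTop_atTop_of_monotone (fun u v h => Real.sqrt_le_sqrt h)
        (fun b => ⟨(max b 0) ^ 2, by
          rw [Real.sqrt_sq (le_max_right b 0)]; exact le_max_left b 0⟩)
    have hs : Filter.Tendsto (fun y => Real.sqrt (P y)) Filter.atTop Filter.atTop :=
      hsqrt.comp hPtop
    have : Filter.Tendsto (fun y => -2 * (Real.sqrt (P y))⁻¹) Filter.atTop (nhds (-2 * 0)) :=
      (hs.inv_tendsto_atTop).const_mul (-2)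
    simp only [mul_zero] at this
    refine this.congr fun y => ?_
    simp [hgdef, div_eq_mul_inv]
  have hderiv' : ∀ y ∈ Set.Ioi (0:ℝ), HasDerivAt g (f 0 y + f 1 y + f 2 y) y :=
    fun y hy => hderiv y (Set.mem_Ici.mpr (le_of_lt hy))
  have hcont : ContinuousWithinAt g (Set.Ici 0) 0 :=
    (hderiv 0 Set.self_mem_Ici).continuousAt.continuousWithinAt
  have hval : ∫ y in Set.Ioi (0:ℝ), (f 0 y + f 1 y + f 2 y) = 0 - g 0 :=
    integral_Ioi_of_hasDerivAt_of_nonneg hcont hderiv' hnonneg htend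
  have hint : IntegrableOn (fun y => f 0 y + f 1 y + f 2 y) (Set.Ioi (0:ℝ)) :=
    integrableOn_Ioi_deriv_of_nonneg hcont hderiv' hnonneg htend
  -- each f j integrable
  have hcontf : ∀ j : Fin 3, ContinuousOn (f j) (Set.Ioi (0:ℝ)) := by
    intro j
    apply ContinuousOn.div continuousOn_const
    · exact ContinuousOn.mul (by fun_prop) ((Real.continuous_sqrt.comp (by fun_prop)).continuousOn)
    · intro y hy
      have hy' : y ∈ Set.Ici (0:ℝ) := Set.mem_Ici.mpr (le_of_lt hy)
      exact (mul_pos (hfac j y hy') (Real.sqrt_pos.mpr (hPpos y hy'))).ne'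
  have hintf : ∀ j : Fin 3, IntegrableOn (f j) (Set.Ioi (0:ℝ)) := by
    intro j
    apply hint.mono' ((hcontf j).aestronglyMeasurable measurableSet_Ioi)
    rw [ae_restrict_iff' measurableSet_Ioi]
    filter_upwards with y hy
    have hy' : y ∈ Set.Ici (0:ℝ) := Set.mem_Ici.mpr (le_of_lt hy)
    rw [Real.norm_eq_abs, abs_of_nonneg (hfnn y hy' j)]
    fin_cases j <;> simp <;> linarith [hfnn y hy' 0, hfnn y hy' 1, hfnn y hy' 2]
  -- split integral
  have hsplit : (∫ y in Set.Ioi (0:ℝ), f 0 y) + (∫ y in Set.Ioi (0:ℝ), f 1 y)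
      + (∫ y in Set.Ioi (0:ℝ), f 2 y) = ∫ y in Set.Ioi (0:ℝ), (f 0 y + f 1 y + f 2 y) := by
    rw [← integral_add (hintf 0) (hintf 1)]
    exact (integral_add ((hintf 0).add (hintf 1)) (hintf 2)).symm
  -- value of g 0
  have hg0 : g 0 = -2 / (l 0 * l 1 * l 2) := by
    have hp0 : P 0 = (l 0 * l 1 * l 2) ^ 2 := by rw [hPdef]; ring
    rw [hgdef]
    simp only [hp0, Real.sqrt_sq (by positivity : (0:ℝ) ≤ l 0 * l 1 * l 2)]
  have hsumval : (∫ y in Set.Ioi (0:ℝ), f 0 y) + (∫ y in Set.Ioi (0:ℝ), f 1 y)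
      + (∫ y in Set.Ioi (0:ℝ), f 2 y) = 2 / (l 0 * l 1 * l 2) := by
    rw [hsplit, hval, hg0]; ring
  simp only [depol]
  have hfe : ∀ j : Fin 3, (∫ y in Set.Ioi (0:ℝ),
      1 / ((l j ^ 2 + y) * Real.sqrt ((l 0 ^ 2 + y) * (l 1 ^ 2 + y) * (l 2 ^ 2 + y))))
      = ∫ y in Set.Ioi (0:ℝ), f j y := fun j => rfl
  rw [hfe 0, hfe 1, hfe 2, ← mul_add, ← mul_add, hsumval]
  field_simp
end

section
/- The integral over the coating satisfies ∫_{ρ_c}^{ρ_e} dρ / ((c₁² + ρ)^{3/2}(c₂² + ρ)^{1/2}(c₃² + ρ)^{1/2}) = 2d_{c1}/g(ρ_c) − 2d_{e1}/g(ρ_e), where d_{c1} = d₁(l_{c1},l_{c2},l_{c3}) and d_{e1} = d₁(l_{e1},l_{e2},l_{e3}). -/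
open MeasureTheory

/-- Fix positive `c₁, c₂, c₃` and `0 ≤ ρ_c < ρ_e`; let
`g(t) = √((c₁²+t)(c₂²+t)(c₃²+t))`, `l_{cj} = √(c_j²+ρ_c)`, `l_{ej} = √(c_j²+ρ_e)`.  Then
`∫_{ρ_c}^{ρ_e} dρ/((c₁²+ρ)^{3/2}(c₂²+ρ)^{1/2}(c₃²+ρ)^{1/2}) = 2 d_{c1}/g(ρ_c) − 2 d_{e1}/g(ρ_e)`,
where `d_{c1} = d₁(l_{c1},l_{c2},l_{c3})` and `d_{e1} = d₁(l_{e1},l_{e2},l_{e3})`. -/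
theorem coating_integral_eq (c : Fin 3 → ℝ) (hc : ∀ j, 0 < c j)
    (ρc ρe : ℝ) (hρc : 0 ≤ ρc) (hρ : ρc < ρe)
    (g : ℝ → ℝ) (hg : ∀ t, g t = Real.sqrt ((c 0 ^ 2 + t) * (c 1 ^ 2 + t) * (c 2 ^ 2 + t)))
    (lc le : Fin 3 → ℝ)
    (hlc : ∀ j, lc j = Real.sqrt (c j ^ 2 + ρc))
    (hle : ∀ j, le j = Real.sqrt (c j ^ 2 + ρe)) :
    (∫ ρ in ρc..ρe,
        1 / ((c 0 ^ 2 + ρ) ^ ((3 : ℝ) / 2) * (c 1 ^ 2 + ρ) ^ ((1 : ℝ) / 2)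
          * (c 2 ^ 2 + ρ) ^ ((1 : ℝ) / 2)))
      = 2 * depol 0 lc / g ρc - 2 * depol 0 le / g ρe := by
  set F : ℝ → ℝ := fun t =>
    1 / ((c 0 ^ 2 + t) ^ ((3 : ℝ) / 2) * (c 1 ^ 2 + t) ^ ((1 : ℝ) / 2)
        * (c 2 ^ 2 + t) ^ ((1 : ℝ) / 2)) with hF
  -- positivity facts
  have hcp : ∀ j, ∀ t : ℝ, 0 ≤ t → 0 < c j ^ 2 + t := fun j t ht =>
    add_pos_of_pos_of_nonneg (pow_pos (hc j) 2) ht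
  -- key: for ρ ≥ 0, 2 * depol 0 l / g ρ = ∫ t in Ioi ρ, F t
  have key : ∀ ρ : ℝ, 0 ≤ ρ → ∀ l : Fin 3 → ℝ, (∀ j, l j = Real.sqrt (c j ^ 2 + ρ)) →
      2 * depol 0 l / g ρ = ∫ t in Set.Ioi ρ, F t := by
    intro ρ hρ0 l hl
    have hj : ∀ j, 0 < c j ^ 2 + ρ := fun j => hcp j ρ hρ0
    have hsq : ∀ j, l j ^ 2 = c j ^ 2 + ρ := fun j => by
      rw [hl j, Real.sq_sqrt (hj j).le]
    have hprod : l 0 * l 1 * l 2 = g ρ := by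
      rw [hl 0, hl 1, hl 2, hg,
        Real.sqrt_mul (by positivity : (0:ℝ) ≤ (c 0 ^ 2 + ρ) * (c 1 ^ 2 + ρ)),
        Real.sqrt_mul (hj 0).le]
    have hgpos : 0 < g ρ := by
      rw [← hprod, hl 0, hl 1, hl 2]
      exact mul_pos (mul_pos (Real.sqrt_pos.mpr (hj 0)) (Real.sqrt_pos.mpr (hj 1)))
        (Real.sqrt_pos.mpr (hj 2))
    have hinner : ∫ y in Set.Ioi (0:ℝ),
        1 / ((l 0 ^ 2 + y) * Real.sqrt ((l 0 ^ 2 + y) * (l 1 ^ 2 + y) * (l 2 ^ 2 + y)))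
        = ∫ y in Set.Ioi (0:ℝ), F (y + ρ) := by
      refine setIntegral_congr_fun measurableSet_Ioi fun y hy => ?_
      have hy0 : (0:ℝ) ≤ y := (Set.mem_Ioi.mp hy).le
      have ha : ∀ j, 0 < c j ^ 2 + (y + ρ) := fun j => by
        have := hj j; linarith
      simp only [hsq, hF]
      have e1 : ∀ j, c j ^ 2 + ρ + y = c j ^ 2 + (y + ρ) := fun j => by ring
      rw [e1 0, e1 1, e1 2]
      rw [Real.sqrt_mul (by positivity) , Real.sqrt_mul (ha 0).le]
      rw [Real.sqrt_eq_rpow, Real.sqrt_eq_rpow, Real.sqrt_eq_rpow]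
      congr 1
      rw [show (3:ℝ)/2 = 1 + 1/2 by norm_num, Real.rpow_add (ha 0), Real.rpow_one]
      ring
    have htrans : ∫ y in Set.Ioi (0:ℝ), F (y + ρ) = ∫ t in Set.Ioi ρ, F t := by
      have h1 := (measurePreserving_add_right (volume : Measure ℝ) ρ).setIntegral_preimage_emb
        (Homeomorph.addRight ρ).isClosedEmbedding.measurableEmbedding F (Set.Ioi ρ)
      have h2 : (fun x : ℝ => x + ρ) ⁻¹' Set.Ioi ρ = Set.Ioi 0 := by
        ext x; simp [Set.mem_Ioi]
      rwa [h2] at h1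
    unfold depol
    rw [hprod, hinner, htrans]
    field_simp
  -- integrability
  have hm : ∀ j, 0 < c j ^ 2 := fun j => pow_pos (hc j) 2
  set m : ℝ := min (min (c 0 ^ 2) (c 1 ^ 2)) (c 2 ^ 2) with hm'
  have hmpos : 0 < m := lt_min (lt_min (hm 0) (hm 1)) (hm 2)
  have hmle : ∀ j, m ≤ c j ^ 2 := by
    intro j
    fin_cases j
    · exact le_trans (min_le_left _ _) (min_le_left _ _)
    · exact le_trans (min_le_left _ _) (min_le_right _ _)
    · exact min_le_right _ _
  have hIntG : IntegrableOn (fun t => (m + t) ^ (-(5:ℝ)/2)) (Set.Ioi ρc) := by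
    have h0 : IntegrableOn (fun x : ℝ => x ^ (-(5:ℝ)/2)) (Set.Ioi (m + ρc)) :=
      integrableOn_Ioi_rpow_of_lt (by norm_num) (by linarith)
    have h1 := ((measurePreserving_add_right (volume : Measure ℝ) m).integrableOn_comp_preimage
      (Homeomorph.addRight m).isClosedEmbedding.measurableEmbedding
      (f := fun x : ℝ => x ^ (-(5:ℝ)/2)) (s := Set.Ioi (m + ρc))).mpr h0
    have h2 : (fun x : ℝ => x + m) ⁻¹' Set.Ioi (m + ρc) = Set.Ioi ρc := by
      ext x; simp [Set.mem_Ioi]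
    rw [h2] at h1
    refine h1.congr_fun (fun x _ => ?_) measurableSet_Ioi
    simp [Function.comp, add_comm]
  have hFcont : ContinuousOn F (Set.Ici ρc) := by
    have hb : ∀ j, ContinuousOn (fun t : ℝ => (c j ^ 2 + t)) (Set.Ici ρc) :=
      fun j => (continuous_const.add continuous_id).continuousOn
    have hne : ∀ (j : Fin 3) (t : ℝ), t ∈ Set.Ici ρc → c j ^ 2 + t ≠ 0 := by
      intro j t ht
      have : 0 ≤ t := le_trans hρc ht
      exact (hcp j t this).ne'
    have h0 := (hb 0).rpow_const (p := (3:ℝ)/2) (fun t ht => Or.inl (hne 0 t ht))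
    have h1 := (hb 1).rpow_const (p := (1:ℝ)/2) (fun t ht => Or.inl (hne 1 t ht))
    have h2 := (hb 2).rpow_const (p := (1:ℝ)/2) (fun t ht => Or.inl (hne 2 t ht))
    refine ContinuousOn.div continuousOn_const ((h0.mul h1).mul h2) ?_
    intro t ht
    have ht0 : 0 ≤ t := le_trans hρc ht
    exact (mul_pos (mul_pos (Real.rpow_pos_of_pos (hcp 0 t ht0) _)
      (Real.rpow_pos_of_pos (hcp 1 t ht0) _)) (Real.rpow_pos_of_pos (hcp 2 t ht0) _)).ne'
  have hIntF : IntegrableOn F (Set.Ioi ρc) := by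
    refine Integrable.mono' hIntG
      ((hFcont.mono (Set.Ioi_subset_Ici le_rfl)).aestronglyMeasurable measurableSet_Ioi) ?_
    filter_upwards [ae_restrict_mem measurableSet_Ioi] with t ht
    have ht0 : 0 ≤ t := le_trans hρc (Set.mem_Ioi.mp ht).le
    have hmt : 0 < m + t := by linarith
    have hjt : ∀ j, 0 < c j ^ 2 + t := fun j => hcp j t ht0
    have hle1 : ∀ (j : Fin 3) (e : ℝ), 0 ≤ e → (m + t) ^ e ≤ (c j ^ 2 + t) ^ e := by
      intro j e he
      exact Real.rpow_le_rpow hmt.le (by have := hmle j; linarith) he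
    have hFt : F t = ((c 0 ^ 2 + t) ^ ((3:ℝ)/2) * (c 1 ^ 2 + t) ^ ((1:ℝ)/2)
        * (c 2 ^ 2 + t) ^ ((1:ℝ)/2))⁻¹ := by simp [hF, one_div]
    have hden : 0 < (c 0 ^ 2 + t) ^ ((3:ℝ)/2) * (c 1 ^ 2 + t) ^ ((1:ℝ)/2)
        * (c 2 ^ 2 + t) ^ ((1:ℝ)/2) :=
      mul_pos (mul_pos (Real.rpow_pos_of_pos (hjt 0) _) (Real.rpow_pos_of_pos (hjt 1) _))
        (Real.rpow_pos_of_pos (hjt 2) _)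
    have hFnn : 0 ≤ F t := by rw [hFt]; positivity
    rw [Real.norm_of_nonneg hFnn, hFt]
    have hmul : (m + t) ^ ((5:ℝ)/2) ≤ (c 0 ^ 2 + t) ^ ((3:ℝ)/2) * (c 1 ^ 2 + t) ^ ((1:ℝ)/2)
        * (c 2 ^ 2 + t) ^ ((1:ℝ)/2) := by
      have e5 : (m + t) ^ ((5:ℝ)/2) = (m + t) ^ ((3:ℝ)/2) * (m + t) ^ ((1:ℝ)/2)
          * (m + t) ^ ((1:ℝ)/2) := by
        rw [← Real.rpow_add hmt, ← Real.rpow_add hmt]; norm_num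
      rw [e5]
      have p1 := hle1 0 (3/2) (by norm_num)
      have p2 := hle1 1 (1/2) (by norm_num)
      have p3 := hle1 2 (1/2) (by norm_num)
      have nn : ∀ e : ℝ, 0 ≤ (m + t) ^ e := fun e => (Real.rpow_pos_of_pos hmt e).le
      calc (m + t) ^ ((3:ℝ)/2) * (m + t) ^ ((1:ℝ)/2) * (m + t) ^ ((1:ℝ)/2)
          ≤ (c 0 ^ 2 + t) ^ ((3:ℝ)/2) * (c 1 ^ 2 + t) ^ ((1:ℝ)/2) * (m + t) ^ ((1:ℝ)/2) := by
            apply mul_le_mul (mul_le_mul p1 p2 (nn _) (by positivity)) le_rfl (nn _) (by positivity)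
        _ ≤ _ := by
            apply mul_le_mul le_rfl p3 (nn _) (by positivity)
    calc ((c 0 ^ 2 + t) ^ ((3:ℝ)/2) * (c 1 ^ 2 + t) ^ ((1:ℝ)/2) * (c 2 ^ 2 + t) ^ ((1:ℝ)/2))⁻¹
        ≤ ((m + t) ^ ((5:ℝ)/2))⁻¹ := by
          apply inv_anti₀ (Real.rpow_pos_of_pos hmt _) hmul
      _ = (m + t) ^ (-(5:ℝ)/2) := by
          rw [← Real.rpow_neg hmt.le]; norm_num
  have hIntF1 : IntegrableOn F (Set.Ioc ρc ρe) :=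
    hIntF.mono_set Set.Ioc_subset_Ioi_self
  have hIntF2 : IntegrableOn F (Set.Ioi ρe) :=
    hIntF.mono_set (Set.Ioi_subset_Ioi hρ.le)
  have hsplit : ∫ t in Set.Ioi ρc, F t
      = (∫ t in Set.Ioc ρc ρe, F t) + ∫ t in Set.Ioi ρe, F t := by
    rw [← setIntegral_union Set.Ioc_disjoint_Ioi_same measurableSet_Ioi hIntF1 hIntF2,
      Set.Ioc_union_Ioi_eq_Ioi hρ.le]
  rw [key ρc hρc lc hlc, key ρe (by linarith) le hle,
    intervalIntegral.integral_of_le hρ.le, hsplit]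
  ring
end

section
/- Positivity of K: with θ₁ = g(ρ_c)/g(ρ_e), for each j ∈ {1,2,3} one has d_j(l_{c1},l_{c2},l_{c3}) − θ₁ d_j(l_{e1},l_{e2},l_{e3}) > 0; in particular K = d_{c1} − θ₁d_{e1} > 0. -/
open MeasureTheory

/-- Positivity of `K`: fix positive `c₁, c₂, c₃` and `0 ≤ ρ_c < ρ_e`;
let `g(t) = √((c₁²+t)(c₂²+t)(c₃²+t))`, `θ₁ = g(ρ_c)/g(ρ_e)`, `l_{cj} = √(c_j²+ρ_c)`,
`l_{ej} = √(c_j²+ρ_e)`.  Then for each `j`, `d_j(l_c) − θ₁ d_j(l_e) > 0`; in particular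
`K = d_{c1} − θ₁ d_{e1} > 0`. -/
theorem K_pos (c : Fin 3 → ℝ) (hc : ∀ j, 0 < c j)
    (ρc ρe : ℝ) (hρc : 0 ≤ ρc) (hρ : ρc < ρe)
    (g : ℝ → ℝ) (hg : ∀ t, g t = Real.sqrt ((c 0 ^ 2 + t) * (c 1 ^ 2 + t) * (c 2 ^ 2 + t)))
    (θ₁ : ℝ) (hθ₁ : θ₁ = g ρc / g ρe)
    (lc le : Fin 3 → ℝ)
    (hlc : ∀ j, lc j = Real.sqrt (c j ^ 2 + ρc))
    (hle : ∀ j, le j = Real.sqrt (c j ^ 2 + ρe)) :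
    ∀ j : Fin 3, depol j lc - θ₁ * depol j le > 0 := by
  intro j
  -- positivity of factors
  have hc2 : ∀ (i : Fin 3) (t : ℝ), 0 ≤ t → 0 < c i ^ 2 + t := fun i t ht =>
    add_pos_of_pos_of_nonneg (pow_pos (hc i) 2) ht
  set F : ℝ → ℝ := fun t =>
    1 / ((c j ^ 2 + t) * Real.sqrt ((c 0 ^ 2 + t) * (c 1 ^ 2 + t) * (c 2 ^ 2 + t))) with hF
  have hFpos : ∀ t : ℝ, 0 ≤ t → 0 < F t := by
    intro t ht
    have h0 := hc2 0 t ht; have h1 := hc2 1 t ht; have h2 := hc2 2 t ht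
    have hj := hc2 j t ht
    have hs : 0 < Real.sqrt ((c 0 ^ 2 + t) * (c 1 ^ 2 + t) * (c 2 ^ 2 + t)) :=
      Real.sqrt_pos.2 (by positivity)
    simp only [hF]
    positivity
  have hFcont : ContinuousOn F (Set.Ici (0 : ℝ)) := by
    apply ContinuousOn.div continuousOn_const
    · exact (ContinuousOn.mul (by fun_prop) (Real.continuous_sqrt.comp (by fun_prop)).continuousOn)
    · intro t ht
      have h0 := hc2 0 t ht; have h1 := hc2 1 t ht; have h2 := hc2 2 t ht
      have hj := hc2 j t ht
      have hs : 0 < Real.sqrt ((c 0 ^ 2 + t) * (c 1 ^ 2 + t) * (c 2 ^ 2 + t)) :=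
        Real.sqrt_pos.2 (by positivity)
      positivity
  have hgpos : ∀ ρ : ℝ, 0 ≤ ρ → 0 < g ρ := by
    intro ρ hρ0
    rw [hg]
    exact Real.sqrt_pos.2 (by
      have h0 := hc2 0 ρ hρ0; have h1 := hc2 1 ρ hρ0; have h2 := hc2 2 ρ hρ0
      positivity)
  -- key reformulation of depol
  have key : ∀ (ρ : ℝ), 0 ≤ ρ → ∀ l : Fin 3 → ℝ,
      (∀ i, l i = Real.sqrt (c i ^ 2 + ρ)) →
      depol j l = g ρ / 2 * ∫ t in Set.Ioi ρ, F t := by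
    intro ρ hρ0 l hl
    have hsq : ∀ i : Fin 3, l i ^ 2 = c i ^ 2 + ρ := fun i => by
      rw [hl i, Real.sq_sqrt (hc2 i ρ hρ0).le]
    have hprod : l 0 * l 1 * l 2 = g ρ := by
      rw [hl 0, hl 1, hl 2, hg,
        ← Real.sqrt_mul (hc2 0 ρ hρ0).le, ← Real.sqrt_mul (by positivity)]
    have hint : (∫ y in Set.Ioi (0 : ℝ),
        1 / ((l j ^ 2 + y) * Real.sqrt ((l 0 ^ 2 + y) * (l 1 ^ 2 + y) * (l 2 ^ 2 + y))))
        = ∫ t in Set.Ioi ρ, F t := by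
      have heq : (fun y : ℝ =>
          1 / ((l j ^ 2 + y) * Real.sqrt ((l 0 ^ 2 + y) * (l 1 ^ 2 + y) * (l 2 ^ 2 + y))))
          = fun y : ℝ => F (ρ + y) := by
        funext y
        simp only [hF, hsq]
        ring_nf
      rw [heq]
      have := (measurePreserving_add_left volume ρ).setIntegral_preimage_emb
        (measurableEmbedding_addLeft ρ) F (Set.Ioi ρ)
      rw [Set.preimage_const_add_Ioi, sub_self] at this
      exact this
    unfold depol
    rw [hprod, hint]
  -- a lower bound constant
  set m : ℝ := min (c 0) (min (c 1) (c 2)) with hm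
  have hmpos : 0 < m := lt_min (hc 0) (lt_min (hc 1) (hc 2))
  have hmle : ∀ i : Fin 3, m ≤ c i := by
    intro i
    fin_cases i
    · exact min_le_left _ _
    · exact le_trans (min_le_right _ _) (min_le_left _ _)
    · exact le_trans (min_le_right _ _) (min_le_right _ _)
  have hm2le : ∀ (i : Fin 3) (t : ℝ), 0 ≤ t → m ^ 2 + t ≤ c i ^ 2 + t := by
    intro i t _
    have := pow_le_pow_left₀ hmpos.le (hmle i) 2
    linarith
  -- the comparison function is integrable on Ioi ρc
  have hcomp : IntegrableOn (fun t : ℝ => (1 / m) * (m ^ 2 + t) ^ (-2 : ℝ))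
      (Set.Ioi ρc) volume := by
    have hbase : IntegrableOn (fun s : ℝ => s ^ (-2 : ℝ)) (Set.Ioi (m ^ 2 + ρc)) volume :=
      integrableOn_Ioi_rpow_of_lt (by norm_num) (by positivity)
    have := ((measurePreserving_add_left volume (m ^ 2)).integrableOn_comp_preimage
      (measurableEmbedding_addLeft (m ^ 2)) (f := fun s : ℝ => s ^ (-2 : ℝ))
      (s := Set.Ioi (m ^ 2 + ρc))).2 hbase
    rw [Set.preimage_const_add_Ioi, add_sub_cancel_left] at this
    exact (this.const_mul (1 / m))
  -- F is integrable on Ioi ρc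
  have hFint : IntegrableOn F (Set.Ioi ρc) volume := by
    have hmeas : AEStronglyMeasurable F (volume.restrict (Set.Ioi ρc)) :=
      (hFcont.mono (Set.Ioi_subset_Ici hρc)).aestronglyMeasurable measurableSet_Ioi
    refine Integrable.mono' hcomp hmeas ?_
    refine (ae_restrict_iff' measurableSet_Ioi).2 (Filter.Eventually.of_forall ?_)
    intro t ht
    have ht0 : (0 : ℝ) ≤ t := le_trans hρc (le_of_lt ht)
    have hFt := hFpos t ht0
    rw [Real.norm_of_nonneg hFt.le]
    have hmt : 0 < m ^ 2 + t := by positivity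
    -- denominator bound
    have hsle : (m ^ 2 + t) * m ≤
        Real.sqrt ((c 0 ^ 2 + t) * (c 1 ^ 2 + t) * (c 2 ^ 2 + t)) := by
      have h1 : ((m ^ 2 + t) * m) ^ 2 ≤ (c 0 ^ 2 + t) * (c 1 ^ 2 + t) * (c 2 ^ 2 + t) := by
        have e0 := hm2le 0 t ht0; have e1 := hm2le 1 t ht0; have e2 := hm2le 2 t ht0
        have e2' : m ^ 2 ≤ c 2 ^ 2 + t := by nlinarith
        calc ((m ^ 2 + t) * m) ^ 2 = (m ^ 2 + t) * (m ^ 2 + t) * m ^ 2 := by ring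
          _ ≤ (c 0 ^ 2 + t) * (c 1 ^ 2 + t) * (c 2 ^ 2 + t) := by
              apply mul_le_mul (mul_le_mul e0 e1 hmt.le (by nlinarith)) e2' (by positivity)
              nlinarith
      calc (m ^ 2 + t) * m = Real.sqrt (((m ^ 2 + t) * m) ^ 2) :=
            (Real.sqrt_sq (by positivity)).symm
        _ ≤ _ := Real.sqrt_le_sqrt h1
    have hden : (m ^ 2 + t) ^ 2 * m ≤
        (c j ^ 2 + t) * Real.sqrt ((c 0 ^ 2 + t) * (c 1 ^ 2 + t) * (c 2 ^ 2 + t)) := by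
      calc (m ^ 2 + t) ^ 2 * m = (m ^ 2 + t) * ((m ^ 2 + t) * m) := by ring
        _ ≤ (c j ^ 2 + t) * Real.sqrt ((c 0 ^ 2 + t) * (c 1 ^ 2 + t) * (c 2 ^ 2 + t)) :=
            mul_le_mul (hm2le j t ht0) hsle (by positivity) (hc2 j t ht0).le
    have hrw : (1 / m) * (m ^ 2 + t) ^ (-2 : ℝ) = 1 / ((m ^ 2 + t) ^ 2 * m) := by
      rw [Real.rpow_neg hmt.le, show ((2:ℝ)) = ((2:ℕ):ℝ) by norm_num, Real.rpow_natCast]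
      field_simp
    rw [hrw]
    apply one_div_le_one_div_of_le (by positivity) hden
  -- split the integral
  have hsplit : (∫ t in Set.Ioi ρc, F t) =
      (∫ t in Set.Ioc ρc ρe, F t) + ∫ t in Set.Ioi ρe, F t := by
    rw [← Set.Ioc_union_Ioi_eq_Ioi hρ.le]
    exact setIntegral_union (Set.Ioc_disjoint_Ioi le_rfl) measurableSet_Ioi
      (hFint.mono_set (by rw [← Set.Ioc_union_Ioi_eq_Ioi hρ.le]; exact Set.subset_union_left))
      (hFint.mono_set (by rw [← Set.Ioc_union_Ioi_eq_Ioi hρ.le]; exact Set.subset_union_right))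
  -- the middle piece is positive
  have hmid : 0 < ∫ t in Set.Ioc ρc ρe, F t := by
    rw [← intervalIntegral.integral_of_le hρ.le]
    apply intervalIntegral.intervalIntegral_pos_of_pos_on
    · apply ContinuousOn.intervalIntegrable
      apply hFcont.mono
      rw [Set.uIcc_of_le hρ.le]
      exact fun x hx => le_trans hρc hx.1
    · exact fun x hx => hFpos x (le_trans hρc hx.1.le)
    · exact hρ
  -- put everything together
  have hdc := key ρc hρc lc hlc
  have hde := key ρe (le_trans hρc hρ.le) le hle
  have hge : g ρe ≠ 0 := (hgpos ρe (le_trans hρc hρ.le)).ne'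
  have hgceq : θ₁ * depol j le = g ρc / 2 * ∫ t in Set.Ioi ρe, F t := by
    rw [hθ₁, hde]
    field_simp
  rw [hdc, hgceq, hsplit]
  have hgc : 0 < g ρc := hgpos ρc hρc
  have : g ρc / 2 * ((∫ t in Set.Ioc ρc ρe, F t) + ∫ t in Set.Ioi ρe, F t) -
      g ρc / 2 * ∫ t in Set.Ioi ρe, F t = g ρc / 2 * ∫ t in Set.Ioc ρc ρe, F t := by ring
  rw [this]
  positivity
end

section
/- Upper bound for K: with θ₁ = g(ρ_c)/g(ρ_e) and θ₂ = 1 − θ₁, the constant K = d_{c1} − θ₁d_{e1} satisfies K < θ₂ < 1, where d_{c1} = d₁(l_{c1},l_{c2},l_{c3}) and d_{e1} = d₁(l_{e1},l_{e2},l_{e3}). -/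
open MeasureTheory

open Set

namespace KAux

variable {a b c : ℝ}

lemma contOn_f (ha : 0 < a) (hb : 0 < b) (hc : 0 < c) :
    ContinuousOn (fun y : ℝ => 1 / ((a + y) * Real.sqrt ((a + y) * (b + y) * (c + y))))
      (Ici 0) := by
  apply ContinuousOn.div continuousOn_const
  · exact ((continuous_const.add continuous_id).continuousOn).mul
      ((((continuous_const.add continuous_id).mul (continuous_const.add continuous_id)).mul
        (continuous_const.add continuous_id)).continuousOn.sqrt)
  · intro y hy
    have hy0 : (0:ℝ) ≤ y := hy
    have h1 : 0 < (a + y) * (b + y) * (c + y) := by positivity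
    have h2 : 0 < Real.sqrt ((a + y) * (b + y) * (c + y)) := Real.sqrt_pos.mpr h1
    positivity

lemma integrable_f (ha : 0 < a) (hb : 0 < b) (hc : 0 < c) :
    IntegrableOn (fun y : ℝ => 1 / ((a + y) * Real.sqrt ((a + y) * (b + y) * (c + y))))
      (Ioi 0) := by
  have hcont := contOn_f ha hb hc
  rw [← Ioc_union_Ioi_eq_Ioi (zero_le_one (α := ℝ))]
  apply IntegrableOn.union
  · exact ((hcont.mono Icc_subset_Ici_self).integrableOn_compact isCompact_Icc).mono_set
      Ioc_subset_Icc_self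
  · apply Integrable.mono' (integrableOn_Ioi_rpow_of_lt (by norm_num : (-5/2:ℝ) < -1) one_pos)
    · exact (hcont.mono (t := Ioi 1) fun y hy => le_of_lt (lt_trans one_pos hy)).aestronglyMeasurable
        measurableSet_Ioi
    · filter_upwards [ae_restrict_mem measurableSet_Ioi] with y hy
      have hy1 : (1:ℝ) < y := hy
      have hy0 : (0:ℝ) < y := lt_trans one_pos hy1
      have hp : 0 < (a + y) * (b + y) * (c + y) := by positivity
      have hs : 0 < Real.sqrt ((a + y) * (b + y) * (c + y)) := Real.sqrt_pos.mpr hp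
      have hval : 0 < 1 / ((a + y) * Real.sqrt ((a + y) * (b + y) * (c + y))) := by positivity
      rw [Real.norm_eq_abs, abs_of_pos hval]
      have h32 : y ^ ((3:ℝ)/2) ≤ Real.sqrt ((a + y) * (b + y) * (c + y)) := by
        have h1 : y ^ (3:ℕ) ≤ (a + y) * (b + y) * (c + y) := by
          have he : y ^ (3:ℕ) = y * y * y := by ring
          rw [he]
          gcongr <;> linarith
        calc y ^ ((3:ℝ)/2) = Real.sqrt (y ^ (3:ℕ)) := by
              rw [Real.sqrt_eq_rpow, ← Real.rpow_natCast y 3, ← Real.rpow_mul hy0.le]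
              norm_num
          _ ≤ _ := Real.sqrt_le_sqrt h1
      have hys : y * y ^ ((3:ℝ)/2) ≤ (a + y) * Real.sqrt ((a + y) * (b + y) * (c + y)) := by
        have hyr : 0 < y ^ ((3:ℝ)/2) := Real.rpow_pos_of_pos hy0 _
        gcongr <;> linarith
      rw [show ((-5:ℝ)/2) = -(1 + 3/2) by norm_num, Real.rpow_neg hy0.le,
        Real.rpow_add hy0, Real.rpow_one, ← one_div]
      exact one_div_le_one_div_of_le (by positivity) hys

lemma shift_integral (f : ℝ → ℝ) (δ : ℝ) :
    ∫ y in Ioi (0:ℝ), f (y + δ) = ∫ y in Ioi δ, f y := by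
  have h := (measurePreserving_add_right (volume : Measure ℝ) δ).setIntegral_preimage_emb
    (measurableEmbedding_addRight δ) f (Ioi δ)
  rw [← h]
  congr 1
  ext x
  simp [sub_eq_iff_eq_add]

lemma contOn_g (ha : 0 < a) (hb : 0 < b) (hc : 0 < c) :
    ContinuousOn (fun y : ℝ => ((a + y)⁻¹ + (b + y)⁻¹ + (c + y)⁻¹) /
      (2 * Real.sqrt ((a + y) * (b + y) * (c + y)))) (Ici 0) := by
  intro y hy
  have hy0 : (0:ℝ) ≤ y := hy
  have hpa : 0 < a + y := by linarith
  have hpb : 0 < b + y := by linarith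
  have hpc : 0 < c + y := by linarith
  have hp : 0 < (a + y) * (b + y) * (c + y) := by positivity
  have hs : 0 < Real.sqrt ((a + y) * (b + y) * (c + y)) := Real.sqrt_pos.mpr hp
  have cwa : ∀ d : ℝ, 0 < d + y → ContinuousWithinAt (fun y : ℝ => (d + y)⁻¹) (Ici 0) y :=
    fun d hd => ((continuous_const.add continuous_id).continuousWithinAt).inv₀ hd.ne'
  apply ContinuousWithinAt.div
  · exact ((cwa a hpa).add (cwa b hpb)).add (cwa c hpc)
  · exact (continuous_const.mul ((((continuous_const.add continuous_id).mul
      (continuous_const.add continuous_id)).mul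
      (continuous_const.add continuous_id)).sqrt)).continuousWithinAt
  · positivity

lemma ftc (ha : 0 < a) (hb : 0 < b) (hc : 0 < c) {δ : ℝ} (hδ : 0 < δ) :
    (Real.sqrt (a * b * c))⁻¹ - (Real.sqrt ((a + δ) * (b + δ) * (c + δ)))⁻¹ =
      ∫ y in (0:ℝ)..δ, ((a + y)⁻¹ + (b + y)⁻¹ + (c + y)⁻¹) /
        (2 * Real.sqrt ((a + y) * (b + y) * (c + y))) := by
  have key : ∀ y ∈ Icc (0:ℝ) δ,
      HasDerivAt (fun y : ℝ => -(Real.sqrt ((a + y) * (b + y) * (c + y)))⁻¹)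
        (((a + y)⁻¹ + (b + y)⁻¹ + (c + y)⁻¹) /
          (2 * Real.sqrt ((a + y) * (b + y) * (c + y)))) y := by
    intro y hy
    have hy0 : (0:ℝ) ≤ y := hy.1
    have hpa : 0 < a + y := by linarith
    have hpb : 0 < b + y := by linarith
    have hpc : 0 < c + y := by linarith
    have hp : 0 < (a + y) * (b + y) * (c + y) := by positivity
    have hs : 0 < Real.sqrt ((a + y) * (b + y) * (c + y)) := Real.sqrt_pos.mpr hp
    have h1 : HasDerivAt (fun y : ℝ => a + y) 1 y := (hasDerivAt_id y).const_add a
    have h2 : HasDerivAt (fun y : ℝ => b + y) 1 y := (hasDerivAt_id y).const_add b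
    have h3 : HasDerivAt (fun y : ℝ => c + y) 1 y := (hasDerivAt_id y).const_add c
    have hP : HasDerivAt (fun y : ℝ => (a + y) * (b + y) * (c + y))
        ((1 * (b + y) + (a + y) * 1) * (c + y) + (a + y) * (b + y) * 1) y :=
      (h1.mul h2).mul h3
    have hS := hP.sqrt (ne_of_gt hp)
    have hI := (hS.inv (ne_of_gt hs)).neg
    convert hI using 1
    · rfl
    · rfl
    · rfl
    have hsq : Real.sqrt ((a + y) * (b + y) * (c + y)) ^ 2 = (a + y) * (b + y) * (c + y) :=
      Real.sq_sqrt hp.le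
    rw [neg_div, neg_neg, hsq, div_div, div_eq_div_iff (by positivity) (by positivity)]
    field_simp [hpa.ne', hpb.ne', hpc.ne']
  have hcont : ContinuousOn (fun y : ℝ => ((a + y)⁻¹ + (b + y)⁻¹ + (c + y)⁻¹) /
      (2 * Real.sqrt ((a + y) * (b + y) * (c + y)))) (uIcc (0:ℝ) δ) :=
    (contOn_g ha hb hc).mono (by rw [uIcc_of_le hδ.le]; exact Icc_subset_Ici_self)
  have := intervalIntegral.integral_eq_sub_of_hasDerivAt
    (fun y hy => key y (by rwa [uIcc_of_le hδ.le] at hy))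
    (hcont.intervalIntegrable)
  rw [this]
  simp only [add_zero]
  ring

end KAux

set_option maxHeartbeats 1000000 in
/-- Upper bound for `K`: fix positive `c₁, c₂, c₃` and `0 ≤ ρ_c < ρ_e`;
let `g(t) = √((c₁²+t)(c₂²+t)(c₃²+t))`, `θ₁ = g(ρ_c)/g(ρ_e)`, `θ₂ = 1 − θ₁`,
`l_{cj} = √(c_j²+ρ_c)`, `l_{ej} = √(c_j²+ρ_e)`.  Then
`K = d_{c1} − θ₁ d_{e1}` satisfies `K < θ₂ < 1`. -/
theorem K_lt_theta2 (c : Fin 3 → ℝ) (hc : ∀ j, 0 < c j)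
    (ρc ρe : ℝ) (hρc : 0 ≤ ρc) (hρ : ρc < ρe)
    (g : ℝ → ℝ) (hg : ∀ t, g t = Real.sqrt ((c 0 ^ 2 + t) * (c 1 ^ 2 + t) * (c 2 ^ 2 + t)))
    (θ₁ θ₂ : ℝ) (hθ₁ : θ₁ = g ρc / g ρe) (hθ₂ : θ₂ = 1 - θ₁)
    (lc le : Fin 3 → ℝ)
    (hlc : ∀ j, lc j = Real.sqrt (c j ^ 2 + ρc))
    (hle : ∀ j, le j = Real.sqrt (c j ^ 2 + ρe))
    (K : ℝ) (hK : K = depol 0 lc - θ₁ * depol 0 le) :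
    K < θ₂ ∧ θ₂ < 1 := by
  have hc0 := hc 0; have hc1 := hc 1; have hc2 := hc 2
  obtain ⟨a, ha_def⟩ : ∃ a, c 0 ^ 2 + ρc = a := ⟨_, rfl⟩
  obtain ⟨b, hb_def⟩ : ∃ b, c 1 ^ 2 + ρc = b := ⟨_, rfl⟩
  obtain ⟨d, hd_def⟩ : ∃ d, c 2 ^ 2 + ρc = d := ⟨_, rfl⟩
  obtain ⟨δ, hδ_def⟩ : ∃ δ, ρe - ρc = δ := ⟨_, rfl⟩
  have ha : 0 < a := by rw [← ha_def]; positivity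
  have hb : 0 < b := by rw [← hb_def]; positivity
  have hd : 0 < d := by rw [← hd_def]; positivity
  have hδ : 0 < δ := by rw [← hδ_def]; linarith
  have hre : ∀ j, c j ^ 2 + ρe = c j ^ 2 + ρc + δ := fun j => by rw [← hδ_def]; ring
  have hlc0 : lc 0 ^ 2 = a := by rw [hlc 0, Real.sq_sqrt (by positivity), ha_def]
  have hlc1 : lc 1 ^ 2 = b := by rw [hlc 1, Real.sq_sqrt (by positivity), hb_def]
  have hlc2 : lc 2 ^ 2 = d := by rw [hlc 2, Real.sq_sqrt (by positivity), hd_def]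
  have hρe : 0 ≤ ρe := le_of_lt (lt_of_le_of_lt hρc hρ)
  have hle0 : le 0 ^ 2 = a + δ := by
    rw [hle 0, Real.sq_sqrt (by positivity), hre 0, ha_def]
  have hle1 : le 1 ^ 2 = b + δ := by
    rw [hle 1, Real.sq_sqrt (by positivity), hre 1, hb_def]
  have hle2 : le 2 ^ 2 = d + δ := by
    rw [hle 2, Real.sq_sqrt (by positivity), hre 2, hd_def]
  have hprodc : lc 0 * lc 1 * lc 2 = Real.sqrt (a * b * d) := by
    rw [hlc 0, hlc 1, hlc 2, ← Real.sqrt_mul (by positivity), ← Real.sqrt_mul (by positivity),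
      ha_def, hb_def, hd_def]
  have hprode : le 0 * le 1 * le 2 = Real.sqrt ((a + δ) * (b + δ) * (d + δ)) := by
    rw [hle 0, hle 1, hle 2, ← Real.sqrt_mul (by positivity), ← Real.sqrt_mul (by positivity),
      hre 0, hre 1, hre 2, ha_def, hb_def, hd_def]
  have hθ1' : θ₁ = Real.sqrt (a * b * d) / Real.sqrt ((a + δ) * (b + δ) * (d + δ)) := by
    rw [hθ₁, hg, hg, hre 0, hre 1, hre 2, ha_def, hb_def, hd_def]
  have hsp0 : 0 < Real.sqrt (a * b * d) := Real.sqrt_pos.mpr (by positivity)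
  have hspδ : 0 < Real.sqrt ((a + δ) * (b + δ) * (d + δ)) := Real.sqrt_pos.mpr (by positivity)
  have hθ1pos : 0 < θ₁ := by rw [hθ1']; positivity
  have h1 : θ₂ < 1 := by rw [hθ₂]; linarith
  refine ⟨?_, h1⟩
  set f : ℝ → ℝ := fun y => 1 / ((a + y) * Real.sqrt ((a + y) * (b + y) * (d + y)))
    with hf_def
  set G : ℝ → ℝ := fun y => ((a + y)⁻¹ + (b + y)⁻¹ + (d + y)⁻¹) /
    (2 * Real.sqrt ((a + y) * (b + y) * (d + y))) with hG_def
  have hint : IntegrableOn f (Set.Ioi 0) := KAux.integrable_f ha hb hd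
  have hshift : ∫ y in Set.Ioi (0:ℝ), f (y + δ) = ∫ y in Set.Ioi δ, f y :=
    KAux.shift_integral f δ
  have hsplit : ∫ y in Set.Ioi (0:ℝ), f y =
      (∫ y in Set.Ioc (0:ℝ) δ, f y) + ∫ y in Set.Ioi δ, f y := by
    rw [← setIntegral_union Set.Ioc_disjoint_Ioi_same measurableSet_Ioi
      (hint.mono_set Set.Ioc_subset_Ioi_self) (hint.mono_set (Set.Ioi_subset_Ioi hδ.le)),
      Set.Ioc_union_Ioi_eq_Ioi hδ.le]
  have hdc : depol 0 lc = Real.sqrt (a * b * d) / 2 * ∫ y in Set.Ioi (0:ℝ), f y := by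
    unfold depol
    rw [hprodc]
    simp only [hf_def, hlc0, hlc1, hlc2]
  have hde : depol 0 le = Real.sqrt ((a + δ) * (b + δ) * (d + δ)) / 2 *
      ∫ y in Set.Ioi (0:ℝ), f (y + δ) := by
    unfold depol
    rw [hprode]
    simp only [hf_def, hle0, hle1, hle2]
    congr 1
    apply setIntegral_congr_fun measurableSet_Ioi
    intro y _
    ring_nf
  have hKeq : K = Real.sqrt (a * b * d) / 2 * ∫ y in Set.Ioc (0:ℝ) δ, f y := by
    rw [hK, hdc, hde, hθ1', hshift, hsplit]
    field_simp
    ring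
  have hθ2' : θ₂ = Real.sqrt (a * b * d) * ∫ y in (0:ℝ)..δ, G y := by
    rw [hG_def, ← KAux.ftc ha hb hd hδ, hθ₂, hθ1']
    field_simp
  have hIoc : ∫ y in Set.Ioc (0:ℝ) δ, f y = ∫ y in (0:ℝ)..δ, f y :=
    (intervalIntegral.integral_of_le hδ.le).symm
  have hcontf : ContinuousOn f (Set.uIcc (0:ℝ) δ) :=
    (KAux.contOn_f ha hb hd).mono
      (by rw [Set.uIcc_of_le hδ.le]; exact fun y hy => hy.1)
  have hcontG : ContinuousOn G (Set.uIcc (0:ℝ) δ) :=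
    (KAux.contOn_g ha hb hd).mono
      (by rw [Set.uIcc_of_le hδ.le]; exact fun y hy => hy.1)
  have hintf : IntervalIntegrable f volume 0 δ := hcontf.intervalIntegrable
  have hintG : IntervalIntegrable G volume 0 δ := hcontG.intervalIntegrable
  have key : ∀ y : ℝ, 0 ≤ y → 0 < G y - f y / 2 := by
    intro y hy0
    have hpa : 0 < a + y := by linarith
    have hpb : 0 < b + y := by linarith
    have hpd : 0 < d + y := by linarith
    have hp : 0 < (a + y) * (b + y) * (d + y) := by positivity
    have hs : 0 < Real.sqrt ((a + y) * (b + y) * (d + y)) := Real.sqrt_pos.mpr hp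
    have heq : G y - f y / 2 =
        ((b + y)⁻¹ + (d + y)⁻¹) / (2 * Real.sqrt ((a + y) * (b + y) * (d + y))) := by
      rw [hG_def, hf_def]
      field_simp
      ring
    rw [heq]
    positivity
  have hpos : 0 < ∫ y in (0:ℝ)..δ, (G y - f y / 2) := by
    apply intervalIntegral.integral_pos hδ
    · exact (hcontG.sub (hcontf.div_const 2)).mono (by rw [Set.uIcc_of_le hδ.le])
    · exact fun x hx => (key x hx.1.le).le
    · exact ⟨0, ⟨le_rfl, hδ.le⟩, key 0 le_rfl⟩
  have hdiff : (∫ y in (0:ℝ)..δ, G y) - (∫ y in (0:ℝ)..δ, f y) / 2 =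
      ∫ y in (0:ℝ)..δ, (G y - f y / 2) := by
    rw [intervalIntegral.integral_sub hintG (hintf.div_const 2),
      intervalIntegral.integral_div]
  rw [hKeq, hθ2', hIoc]
  have hmul : 0 < Real.sqrt (a * b * d) *
      ((∫ y in (0:ℝ)..δ, G y) - (∫ y in (0:ℝ)..δ, f y) / 2) :=
    mul_pos hsp0 (by rw [hdiff]; exact hpos)
  have hexp : Real.sqrt (a * b * d) *
      ((∫ y in (0:ℝ)..δ, G y) - (∫ y in (0:ℝ)..δ, f y) / 2) =
      Real.sqrt (a * b * d) * (∫ y in (0:ℝ)..δ, G y) -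
        Real.sqrt (a * b * d) / 2 * (∫ y in (0:ℝ)..δ, f y) := by ring
  linarith [hmul, hexp]
end
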